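/- Let Λ be an extremally disconnected compact Hausdorff space. For every Borel function g : Λ → ℍ there exists a normal function (f, W_f) on Λ such that the set W_f ∪ {x ∈ Λ∖W_f : f(x) ≠ g(x)} is meager; moreover (f, W_f) is the unique normal function with this property. (Lemma 41, for quaternion values, i.e. the case card(v) ≤ ℵ₀) -/

import Mathlib

open Filter Topology Set

/-- A normal function on `Λ` with values in the quaternions: a pair `(f, W)` where
`Λ ∖ W` is open and dense, `f` is continuous on `Λ ∖ W`, and `‖f x‖ → ∞` as `x`
approaches any point of `W` within `Λ ∖ W`. -/
structure IsNormalFn {Λ : Type*} [TopologicalSpace Λ]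
    (f : Λ → Quaternion ℝ) (W : Set Λ) : Prop where
  isOpen_compl : IsOpen Wᶜ
  dense_compl : Dense Wᶜ
  contOn : ContinuousOn f Wᶜ
  tendsto_norm : ∀ y ∈ W, Tendsto (fun x => ‖f x‖) (𝓝[Wᶜ] y) atTop


lemma exists_residual_continuousOn {Λ : Type*} [TopologicalSpace Λ]
    (g : Λ → Quaternion ℝ)
    (hg : @Measurable Λ (Quaternion ℝ) (borel Λ) (borel (Quaternion ℝ)) g) :
    ∃ D : Set Λ, D ∈ residual Λ ∧ ContinuousOn g D := by
  letI : MeasurableSpace Λ := borel Λ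
  haveI : BorelSpace Λ := ⟨rfl⟩
  obtain ⟨b, hbc, -, hb⟩ := TopologicalSpace.exists_countable_basis (Quaternion ℝ)
  have hmeas : ∀ s ∈ b, BaireMeasurableSet (g ⁻¹' s) := by
    intro s hs
    have : MeasurableSet (g ⁻¹' s) :=
      hg (MeasurableSpace.measurableSet_generateFrom (hb.isOpen hs))
    exact this.baireMeasurableSet
  choose u huo hue using fun s (hs : s ∈ b) => (hmeas s hs).residualEq_isOpen
  refine ⟨⋂ s ∈ b, {x | (x ∈ g ⁻¹' s) = (x ∈ u s ‹_›)}, ?_, ?_⟩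
  · exact (countable_bInter_mem hbc).mpr fun s hs => hue s hs
  · intro x hx
    have hxD : ∀ s (hs : s ∈ b), (x ∈ g ⁻¹' s) = (x ∈ u s hs) := by
      intro s hs
      exact (mem_iInter₂.1 hx) s hs
    rw [ContinuousWithinAt, (hb.nhds_hasBasis (a := g x)).tendsto_right_iff]
    rintro t ⟨htb, hgxt⟩
    have hxu : x ∈ u t htb := by rw [← hxD t htb]; exact hgxt
    filter_upwards [inter_mem_nhdsWithin _ (((huo t htb).mem_nhds hxu)), self_mem_nhdsWithin]
      with y hy hyD
    have : (y ∈ g ⁻¹' t) = (y ∈ u t htb) := (mem_iInter₂.1 hyD) t htb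
    show y ∈ g ⁻¹' t
    rw [this]
    exact hy.2

lemma exists_continuous_extension_real {Λ : Type*} [TopologicalSpace Λ]
    [ExtremallyDisconnected Λ] {S : Set Λ} (hS : Dense S)
    {h : Λ → ℝ} (hc : ContinuousOn h S) {c : ℝ} (hb : ∀ x ∈ S, |h x| ≤ c) :
    ∃ F : Λ → ℝ, Continuous F ∧ ∀ x ∈ S, F x = h x := by
  -- open sets realizing sublevel / superlevel sets on S
  have hG : ∀ r : ℚ, ∃ G : Set Λ, IsOpen G ∧ h ⁻¹' (Iio (r : ℝ)) ∩ S = G ∩ S :=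
    fun r => (continuousOn_iff'.1 hc) _ isOpen_Iio
  have hH : ∀ r : ℚ, ∃ H : Set Λ, IsOpen H ∧ h ⁻¹' (Ioi (r : ℝ)) ∩ S = H ∩ S :=
    fun r => (continuousOn_iff'.1 hc) _ isOpen_Ioi
  choose G hGo hGe using hG
  choose H hHo hHe using hH
  -- empty open sets intersecting dense S trivially
  have empty_of_inter : ∀ {V : Set Λ}, IsOpen V → V ∩ S = ∅ → V = ∅ := by
    intro V hVo hVS
    rcases V.eq_empty_or_nonempty with he | hne
    · exact he
    · exact absurd (hS.inter_open_nonempty V hVo hne)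
        (by rw [hVS]; exact not_nonempty_empty)
  set W : ℚ → Set Λ := fun r => closure (G r) with hW
  have hWclosed : ∀ r, IsClosed (W r) := fun r => isClosed_closure
  have hWopen : ∀ r, IsOpen (W r) := fun r => ExtremallyDisconnected.open_closure _ (hGo r)
  -- W r is disjoint from closure (H r)
  have hdisj : ∀ r : ℚ, W r ∩ closure (H r) = ∅ := by
    intro r
    have hGH : G r ∩ H r = ∅ := by
      apply empty_of_inter ((hGo r).inter (hHo r))
      have : G r ∩ H r ∩ S ⊆ (h ⁻¹' (Iio (r:ℝ)) ∩ S) ∩ (h ⁻¹' (Ioi (r:ℝ)) ∩ S) := by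
        rw [hGe, hHe]; intro x hx; exact ⟨⟨hx.1.1, hx.2⟩, hx.1.2, hx.2⟩
      refine eq_empty_of_subset_empty (this.trans ?_)
      rintro x ⟨⟨hx1, -⟩, hx2, -⟩
      have h1 : h x < (r : ℝ) := hx1
      have h2 : (r : ℝ) < h x := hx2
      exact absurd (lt_trans h1 h2) (lt_irrefl _)
    have h1 : closure (H r) ∩ G r = ∅ := by
      refine eq_empty_of_subset_empty ?_
      have h2 := (hGo r).inter_closure (t := H r)
      rw [hGH, closure_empty] at h2
      rw [inter_comm]
      exact h2
    show closure (G r) ∩ closure (H r) = ∅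
    refine eq_empty_of_subset_empty ?_
    have h3 := (ExtremallyDisconnected.open_closure _ (hHo r)).inter_closure (t := G r)
    rw [h1, closure_empty] at h3
    rw [inter_comm]
    exact h3
  -- monotonicity
  have hmono : ∀ {r r' : ℚ}, r < r' → W r ⊆ W r' := by
    intro r r' hrr
    have hcover : S ⊆ G r' ∪ H r := by
      intro s hs
      rcases lt_or_ge (h s) (r' : ℝ) with hlt | hle
      · have : s ∈ h ⁻¹' (Iio (r':ℝ)) ∩ S := ⟨hlt, hs⟩
        rw [hGe] at this; exact Or.inl this.1
      · have : s ∈ h ⁻¹' (Ioi (r:ℝ)) ∩ S := ⟨lt_of_lt_of_le (by exact_mod_cast hrr) hle, hs⟩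
        rw [hHe] at this; exact Or.inr this.1
    have hdense : closure (G r' ∪ H r) = univ := by
      have : Dense (G r' ∪ H r) := hS.mono hcover
      exact this.closure_eq
    rw [closure_union] at hdense
    intro x hx
    have hxnH : x ∉ closure (H r) := fun hxH =>
      absurd (mem_inter hx hxH) (by rw [hdisj r]; exact notMem_empty x)
    have : x ∈ closure (G r') ∪ closure (H r) := hdense ▸ mem_univ x
    exact this.resolve_right hxnH
  -- large r: W r = univ ; small r: W r = ∅
  have hbig : ∀ r : ℚ, c < (r : ℝ) → W r = univ := by
    intro r hr
    have : S ⊆ G r := by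
      intro s hs
      have : s ∈ h ⁻¹' (Iio (r:ℝ)) ∩ S :=
        ⟨lt_of_le_of_lt (le_trans (le_abs_self _) (hb s hs)) hr, hs⟩
      rw [hGe] at this; exact this.1
    have := closure_mono this
    rw [hS.closure_eq] at this
    exact eq_univ_of_univ_subset this
  have hsmall : ∀ r : ℚ, (r : ℝ) < -c → W r = ∅ := by
    intro r hr
    have : G r ∩ S = ∅ := by
      rw [← hGe]
      refine eq_empty_of_subset_empty ?_
      rintro x ⟨hx1, hx2⟩
      have := hb x hx2
      have : -c ≤ h x := by cases abs_le.1 (hb x hx2); linarith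
      exact absurd (lt_of_lt_of_le hr this) (not_lt.2 (le_of_lt hx1))
    rw [hW]; simp only
    rw [empty_of_inter (hGo r) this, closure_empty]
  -- the extension
  set A : Λ → Set ℝ := fun x => ((↑) : ℚ → ℝ) '' {r : ℚ | x ∈ W r} with hA
  obtain ⟨r₀, hr₀⟩ := exists_rat_gt c
  have hAne : ∀ x, (A x).Nonempty := by
    intro x
    refine ⟨r₀, ⟨r₀, ?_, rfl⟩⟩
    show x ∈ W r₀
    rw [hbig r₀ hr₀]
    exact mem_univ x
  have hAbdd : ∀ x, BddBelow (A x) := by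
    intro x
    refine ⟨-c - 1, ?_⟩
    rintro t ⟨r, hr, rfl⟩
    by_contra hlt
    push_neg at hlt
    have hrc : (r : ℝ) < -c := by linarith
    have hr' : x ∈ W r := hr
    rw [hsmall r hrc] at hr'
    exact hr'
  set F : Λ → ℝ := fun x => sInf (A x) with hF
  have hFle : ∀ {x r}, x ∈ W r → F x ≤ r := fun {x r} hx =>
    csInf_le (hAbdd x) ⟨r, hx, rfl⟩
  have hFge : ∀ {x r}, x ∉ W r → (r : ℝ) ≤ F x := by
    intro x r hx
    refine le_csInf (hAne x) ?_
    rintro t ⟨r', hr', rfl⟩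
    by_contra hlt
    push_neg at hlt
    have : r' < r := by exact_mod_cast hlt
    exact hx (hmono this hr')
  refine ⟨F, ?_, ?_⟩
  · rw [continuous_iff_continuousAt]
    intro x
    rw [ContinuousAt, Metric.tendsto_nhds]
    intro ε hε
    obtain ⟨t, ⟨q, hq, rfl⟩, hqlt⟩ :=
      exists_lt_of_csInf_lt (hAne x) (show F x < F x + ε by linarith)
    obtain ⟨p, hp1, hp2⟩ := exists_rat_btwn (show F x - ε < F x by linarith)
    have hxp : x ∉ W p := fun hxW => absurd (hFle hxW) (not_le.2 hp2)
    have hVmem : W q ∩ (W p)ᶜ ∈ 𝓝 x :=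
      ((hWopen q).inter (hWclosed p).isOpen_compl).mem_nhds ⟨hq, hxp⟩
    filter_upwards [hVmem] with y hy
    have h1 : F y ≤ q := hFle hy.1
    have h2 : (p : ℝ) ≤ F y := hFge hy.2
    rw [Real.dist_eq, abs_sub_lt_iff]
    constructor <;> linarith
  · intro s hs
    have hle : F s ≤ h s := by
      by_contra hlt
      push_neg at hlt
      obtain ⟨r, hr1, hr2⟩ := exists_rat_btwn hlt
      have : s ∈ G r := by
        have : s ∈ h ⁻¹' (Iio (r:ℝ)) ∩ S := ⟨hr1, hs⟩
        rw [hGe] at this; exact this.1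
      exact absurd (hFle (subset_closure this)) (not_le.2 hr2)
    have hge : h s ≤ F s := by
      by_contra hlt
      push_neg at hlt
      obtain ⟨r, hr1, hr2⟩ := exists_rat_btwn hlt
      have hsH : s ∈ H r := by
        have : s ∈ h ⁻¹' (Ioi (r:ℝ)) ∩ S := ⟨hr2, hs⟩
        rw [hHe] at this; exact this.1
      have hsnW : s ∉ W r := by
        intro hsW
        exact absurd (mem_inter hsW (subset_closure hsH))
          (by rw [hdisj r]; exact notMem_empty s)
      exact absurd (hFge hsnW) (not_le.2 hr1)
    linarith

noncomputable def quatI : Quaternion ℝ := ⟨0,1,0,0⟩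
noncomputable def quatJ : Quaternion ℝ := ⟨0,0,1,0⟩
noncomputable def quatK : Quaternion ℝ := ⟨0,0,0,1⟩

lemma quat_abs_re_le (q : Quaternion ℝ) : |q.re| ≤ ‖q‖ := by
  have h1 := Quaternion.normSq_def' q
  have h2 := Quaternion.normSq_eq_norm_mul_self q
  nlinarith [norm_nonneg q, abs_nonneg q.re, sq_abs q.re, sq_nonneg q.imI, sq_nonneg q.imJ,
    sq_nonneg q.imK]

lemma quat_abs_imI_le (q : Quaternion ℝ) : |q.imI| ≤ ‖q‖ := by
  have h1 := Quaternion.normSq_def' q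
  have h2 := Quaternion.normSq_eq_norm_mul_self q
  nlinarith [norm_nonneg q, abs_nonneg q.imI, sq_abs q.imI, sq_nonneg q.re, sq_nonneg q.imJ,
    sq_nonneg q.imK]

lemma quat_abs_imJ_le (q : Quaternion ℝ) : |q.imJ| ≤ ‖q‖ := by
  have h1 := Quaternion.normSq_def' q
  have h2 := Quaternion.normSq_eq_norm_mul_self q
  nlinarith [norm_nonneg q, abs_nonneg q.imJ, sq_abs q.imJ, sq_nonneg q.re, sq_nonneg q.imI,
    sq_nonneg q.imK]

lemma quat_abs_imK_le (q : Quaternion ℝ) : |q.imK| ≤ ‖q‖ := by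
  have h1 := Quaternion.normSq_def' q
  have h2 := Quaternion.normSq_eq_norm_mul_self q
  nlinarith [norm_nonneg q, abs_nonneg q.imK, sq_abs q.imK, sq_nonneg q.re, sq_nonneg q.imI,
    sq_nonneg q.imJ]

lemma quat_mk_eq (a b c d : ℝ) :
    (⟨a, b, c, d⟩ : Quaternion ℝ) =
      (a : Quaternion ℝ) + (b : Quaternion ℝ) * quatI
        + (c : Quaternion ℝ) * quatJ
        + (d : Quaternion ℝ) * quatK := by
  ext <;> simp [Quaternion.re_mul, Quaternion.imI_mul,
    Quaternion.imJ_mul, Quaternion.imK_mul] <;> simp [quatI, quatJ, quatK]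


lemma exists_continuous_extension_quat {Λ : Type*} [TopologicalSpace Λ]
    [ExtremallyDisconnected Λ] {S : Set Λ} (hS : Dense S)
    {h : Λ → Quaternion ℝ} (hc : ContinuousOn h S) {c : ℝ} (hb : ∀ x ∈ S, ‖h x‖ ≤ c) :
    ∃ F : Λ → Quaternion ℝ, Continuous F ∧ ∀ x ∈ S, F x = h x := by
  obtain ⟨F1, hF1c, hF1e⟩ := exists_continuous_extension_real hS
    (Quaternion.continuous_re.comp_continuousOn hc)
    (fun x hx => le_trans (quat_abs_re_le _) (hb x hx))
  obtain ⟨F2, hF2c, hF2e⟩ := exists_continuous_extension_real hS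
    (Quaternion.continuous_imI.comp_continuousOn hc)
    (fun x hx => le_trans (quat_abs_imI_le _) (hb x hx))
  obtain ⟨F3, hF3c, hF3e⟩ := exists_continuous_extension_real hS
    (Quaternion.continuous_imJ.comp_continuousOn hc)
    (fun x hx => le_trans (quat_abs_imJ_le _) (hb x hx))
  obtain ⟨F4, hF4c, hF4e⟩ := exists_continuous_extension_real hS
    (Quaternion.continuous_imK.comp_continuousOn hc)
    (fun x hx => le_trans (quat_abs_imK_le _) (hb x hx))
  refine ⟨fun x => ⟨F1 x, F2 x, F3 x, F4 x⟩, ?_, ?_⟩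
  · have heq : (fun x => (⟨F1 x, F2 x, F3 x, F4 x⟩ : Quaternion ℝ)) =
        fun x => (F1 x : Quaternion ℝ) + (F2 x : Quaternion ℝ) * quatI
          + (F3 x : Quaternion ℝ) * quatJ
          + (F4 x : Quaternion ℝ) * quatK := by
      funext x; exact quat_mk_eq _ _ _ _
    rw [heq]
    exact (((Quaternion.continuous_coe.comp hF1c).add
      ((Quaternion.continuous_coe.comp hF2c).mul continuous_const)).add
      ((Quaternion.continuous_coe.comp hF3c).mul continuous_const)).add
      ((Quaternion.continuous_coe.comp hF4c).mul continuous_const)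
  · intro x hx
    ext
    · exact hF1e x hx
    · exact hF2e x hx
    · exact hF3e x hx
    · exact hF4e x hx

private lemma isMeagre_union' {Λ : Type*} [TopologicalSpace Λ] {s t : Set Λ}
    (hs : IsMeagre s) (ht : IsMeagre t) : IsMeagre (s ∪ t) := by
  rw [IsMeagre, Set.compl_union]
  exact Filter.inter_mem hs ht

open Filter Topology Set in
/-- Lemma 41 (quaternion values): every Borel quaternion-valued function on an extremally
disconnected compact Hausdorff space agrees off a meager set with a unique normal function. -/
theorem exists_unique_normalFn_eq_off_meagre {Λ : Type*} [TopologicalSpace Λ]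
    [CompactSpace Λ] [T2Space Λ] [ExtremallyDisconnected Λ] [Nonempty Λ]
    (g : Λ → Quaternion ℝ)
    (hgBorel : @Measurable Λ (Quaternion ℝ) (borel Λ) (borel (Quaternion ℝ)) g) :
    ∃ (f : Λ → Quaternion ℝ) (W : Set Λ), IsNormalFn f W ∧
      IsMeagre (W ∪ {x | x ∈ Wᶜ ∧ f x ≠ g x}) ∧
      ∀ (f' : Λ → Quaternion ℝ) (W' : Set Λ), IsNormalFn f' W' →
        IsMeagre (W' ∪ {x | x ∈ W'ᶜ ∧ f' x ≠ g x}) →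
        W' = W ∧ ∀ x ∈ Wᶜ, f' x = f x := by
  classical
  obtain ⟨D, hDres, hDcont⟩ := exists_residual_continuousOn g hgBorel
  have hDdense : Dense D := dense_of_mem_residual hDres
  -- open sets realizing the bounded pieces on D
  have hOex : ∀ n : ℕ, ∃ O : Set Λ, IsOpen O ∧
      (fun x => ‖g x‖) ⁻¹' (Iio ((n : ℝ) + 1)) ∩ D = O ∩ D :=
    fun n => (continuousOn_iff'.1 hDcont.norm) _ isOpen_Iio
  choose O hOo hOe using hOex
  set K : ℕ → Set Λ := fun n => closure (O n) with hK
  have hKclosed : ∀ n, IsClosed (K n) := fun n => isClosed_closure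
  have hKopen : ∀ n, IsOpen (K n) := fun n => ExtremallyDisconnected.open_closure _ (hOo n)
  set U : Set Λ := ⋃ n, K n with hUdef
  have hUopen : IsOpen U := isOpen_iUnion hKopen
  have hDU : D ⊆ U := by
    intro x hx
    obtain ⟨n, hn⟩ := exists_nat_gt ‖g x‖
    have hxO : x ∈ O n ∩ D := by
      rw [← hOe n]
      exact ⟨show ‖g x‖ < (n : ℝ) + 1 by linarith, hx⟩
    exact mem_iUnion.2 ⟨n, subset_closure hxO.1⟩
  have hUdense : Dense U := hDdense.mono hDU
  -- dense open sets meet D densely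
  have hdense_open : ∀ {Ω : Set Λ}, IsOpen Ω → Ω ⊆ closure (D ∩ Ω) := by
    intro Ω hΩo x hxΩ
    rw [mem_closure_iff]
    intro V hVo hxV
    obtain ⟨z, hz⟩ := hDdense.inter_open_nonempty (V ∩ Ω) (hVo.inter hΩo) ⟨x, hxV, hxΩ⟩
    exact ⟨z, hz.1.1, hz.2, hz.1.2⟩
  -- truncations of g
  set gq : ℕ → Λ → Quaternion ℝ :=
    fun n x => (((n : ℝ) + 1) / max ((n : ℝ) + 1) ‖g x‖) • g x with hgq
  have hden_pos : ∀ (n : ℕ) (x : Λ), (0 : ℝ) < max ((n : ℝ) + 1) ‖g x‖ :=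
    fun n x => lt_of_lt_of_le (by positivity) (le_max_left _ _)
  have hgq_cont : ∀ n, ContinuousOn (gq n) D := by
    intro n
    refine ContinuousOn.smul (f := fun x => ((n : ℝ) + 1) / max ((n : ℝ) + 1) ‖g x‖) ?_ hDcont
    exact ContinuousOn.div continuousOn_const (ContinuousOn.sup continuousOn_const hDcont.norm)
      (fun x _ => ne_of_gt (hden_pos n x))
  have hgq_norm : ∀ (n : ℕ) (x : Λ), ‖gq n x‖ = ((n : ℝ) + 1) * ‖g x‖ / max ((n : ℝ) + 1) ‖g x‖ := by
    intro n x
    rw [hgq]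
    simp only
    rw [norm_smul, Real.norm_eq_abs, abs_div, abs_of_nonneg (by positivity : (0:ℝ) ≤ (n:ℝ)+1),
      abs_of_nonneg (le_of_lt (hden_pos n x))]
    ring
  have hgq_bound : ∀ (n : ℕ) (x : Λ), ‖gq n x‖ ≤ (n : ℝ) + 1 := by
    intro n x
    rw [hgq_norm, div_le_iff₀ (hden_pos n x)]
    nlinarith [norm_nonneg (g x), le_max_right ((n : ℝ) + 1) ‖g x‖, hden_pos n x]
  have hgq_eq : ∀ (n : ℕ) (x : Λ), ‖g x‖ < (n : ℝ) + 1 → gq n x = g x := by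
    intro n x hlt
    rw [hgq]
    simp only
    rw [max_eq_left (le_of_lt hlt), div_self (by positivity), one_smul]
  have hgq_min : ∀ (n : ℕ) (x : Λ), min ((n : ℝ) + 1) ‖g x‖ ≤ ‖gq n x‖ := by
    intro n x
    rw [hgq_norm]
    rcases le_total ‖g x‖ ((n : ℝ) + 1) with hle | hle
    · rw [max_eq_left hle, mul_comm, mul_div_assoc,
        div_self (by positivity : ((n:ℝ)+1) ≠ 0), mul_one]
      exact min_le_right _ _
    · have hgpos : (0 : ℝ) < ‖g x‖ := lt_of_lt_of_le (by positivity) hle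
      rw [max_eq_right hle, mul_div_assoc, div_self (ne_of_gt hgpos), mul_one]
      exact min_le_left _ _
  -- continuous extensions
  have hFex : ∀ n : ℕ, ∃ F : Λ → Quaternion ℝ, Continuous F ∧ ∀ x ∈ D, F x = gq n x :=
    fun n => exists_continuous_extension_quat hDdense (hgq_cont n) (fun x _ => hgq_bound n x)
  choose F hFc hFe using hFex
  -- the normal function
  set f : Λ → Quaternion ℝ :=
    fun x => if hx : ∃ n, x ∈ K n then F (Nat.find hx) x else 0 with hf
  set L : ℕ → Set Λ := fun m => K m \ ⋃ (k) (_ : k < m), K k with hL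
  have hLopen : ∀ m, IsOpen (L m) := fun m =>
    (hKopen m).sdiff (Set.Finite.isClosed_biUnion (finite_Iio m) fun k _ => hKclosed k)
  have hmemL : ∀ (x : Λ) (hx : ∃ n, x ∈ K n), x ∈ L (Nat.find hx) := by
    intro x hx
    refine ⟨Nat.find_spec hx, ?_⟩
    intro hxk
    obtain ⟨k, hk, hxkk⟩ := mem_iUnion₂.1 hxk
    exact Nat.find_min hx hk hxkk
  have hfeqF : ∀ m x, x ∈ L m → f x = F m x := by
    intro m x hxL
    have hx : ∃ n, x ∈ K n := ⟨m, hxL.1⟩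
    rw [hf]
    simp only
    rw [dif_pos hx]
    congr 1
    rw [Nat.find_eq_iff]
    exact ⟨hxL.1, fun k hk hxk => hxL.2 (mem_iUnion₂.2 ⟨k, hk, hxk⟩)⟩
  have hfcont : ContinuousOn f U := by
    intro x hxU
    have hx : ∃ n, x ∈ K n := mem_iUnion.1 hxU
    have hxL : x ∈ L (Nat.find hx) := hmemL x hx
    have heq : f =ᶠ[𝓝 x] F (Nat.find hx) :=
      eventually_of_mem ((hLopen _).mem_nhds hxL) (fun y hy => hfeqF _ y hy)
    exact ((hFc _).continuousAt.congr heq.symm).continuousWithinAt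
  -- lower bound on layers
  have hgx_ge : ∀ (k : ℕ) (x : Λ), x ∈ D → x ∉ K k → ((k : ℝ) + 1) ≤ ‖g x‖ := by
    intro k x hxD hxK
    by_contra hlt
    push_neg at hlt
    have hxO : x ∈ O k ∩ D := by
      rw [← hOe k]
      exact ⟨hlt, hxD⟩
    exact hxK (subset_closure hxO.1)
  have hlow : ∀ m x, x ∈ L m → (m : ℝ) ≤ ‖f x‖ := by
    intro m x hxL
    rw [hfeqF m x hxL]
    rcases m with _ | k
    · simpa using norm_nonneg (F 0 x)
    · have hsub : D ∩ L (k + 1) ⊆ {y | ((k : ℝ) + 1) ≤ ‖F (k + 1) y‖} := by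
        rintro y ⟨hyD, hyL⟩
        have hynK : y ∉ K k := fun hyK =>
          hyL.2 (mem_iUnion₂.2 ⟨k, Nat.lt_succ_self k, hyK⟩)
        have hge := hgx_ge k y hyD hynK
        have hmin : ((k : ℝ) + 1) ≤ min (((k + 1 : ℕ) : ℝ) + 1) ‖g y‖ := by
          refine le_min ?_ hge
          push_cast
          linarith
        have : ((k : ℝ) + 1) ≤ ‖gq (k + 1) y‖ := le_trans hmin (hgq_min (k + 1) y)
        rw [mem_setOf_eq, hFe (k + 1) y hyD]
        exact this
      have hclosed : IsClosed {y | ((k : ℝ) + 1) ≤ ‖F (k + 1) y‖} :=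
        isClosed_le continuous_const (hFc (k + 1)).norm
      have hx' := closure_minimal hsub hclosed (hdense_open (hLopen (k + 1)) hxL)
      rw [mem_setOf_eq] at hx'
      push_cast
      exact hx'
  -- blow-up at points of the complement
  have htend : ∀ y ∈ Uᶜ, Tendsto (fun x => ‖f x‖) (𝓝[U] y) atTop := by
    intro y hy
    rw [tendsto_atTop]
    intro N
    obtain ⟨M, hM⟩ := exists_nat_ge N
    have hVc : IsClosed (⋃ (k) (_ : k ≤ M), K k) :=
      Set.Finite.isClosed_biUnion (finite_Iic M) fun k _ => hKclosed k
    have hyV : y ∈ (⋃ (k) (_ : k ≤ M), K k)ᶜ := by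
      intro hyK
      obtain ⟨k, -, hyk⟩ := mem_iUnion₂.1 hyK
      exact hy (mem_iUnion.2 ⟨k, hyk⟩)
    filter_upwards [mem_nhdsWithin_of_mem_nhds (hVc.isOpen_compl.mem_nhds hyV),
      self_mem_nhdsWithin] with x hxV hxU
    have hx : ∃ n, x ∈ K n := mem_iUnion.1 hxU
    have hxL : x ∈ L (Nat.find hx) := hmemL x hx
    have hmM : M < Nat.find hx := by
      by_contra hcon
      push_neg at hcon
      exact hxV (mem_iUnion₂.2 ⟨Nat.find hx, hcon, Nat.find_spec hx⟩)
    calc N ≤ (M : ℝ) := hM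
      _ ≤ (Nat.find hx : ℝ) := by exact_mod_cast le_of_lt hmM
      _ ≤ ‖f x‖ := hlow _ x hxL
  -- meagerness of the exceptional set
  have hWmeagre : IsMeagre (Uᶜ) := by
    rw [IsMeagre, compl_compl]
    exact residual_of_dense_open hUopen hUdense
  have hDcmeagre : IsMeagre Dᶜ := by
    rw [IsMeagre, compl_compl]
    exact hDres
  have hKOmeagre : ∀ n, IsMeagre (K n \ O n) := by
    intro n
    rw [IsMeagre]
    have hcompl : (K n \ O n)ᶜ = (K n)ᶜ ∪ O n := by
      rw [diff_eq, compl_inter, compl_compl]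
    rw [hcompl]
    apply residual_of_dense_open ((hKclosed n).isOpen_compl.union (hOo n))
    rw [dense_iff_inter_open]
    intro V hVo hVne
    rcases (V ∩ O n).eq_empty_or_nonempty with he | ⟨z, hz⟩
    · have hVK : V ∩ K n = ∅ := by
        refine eq_empty_of_subset_empty ?_
        have h2 := hVo.inter_closure (t := O n)
        rw [he, closure_empty] at h2
        exact h2
      obtain ⟨z, hz⟩ := hVne
      refine ⟨z, hz, Or.inl ?_⟩
      intro hzK
      exact absurd (mem_inter hz hzK) (by rw [hVK]; exact notMem_empty z)
    · exact ⟨z, hz.1, Or.inr hz.2⟩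
  have hbadsub : {x | x ∈ Uᶜᶜ ∧ f x ≠ g x} ⊆ Dᶜ ∪ ⋃ n, (K n \ O n) := by
    rintro x ⟨hxU', hne⟩
    by_contra hcon
    rw [mem_union] at hcon
    push_neg at hcon
    obtain ⟨hxD', hxKO⟩ := hcon
    have hxD : x ∈ D := not_not.1 hxD'
    have hxU : x ∈ U := by rwa [compl_compl] at hxU'
    have hx : ∃ n, x ∈ K n := mem_iUnion.1 hxU
    have hxL : x ∈ L (Nat.find hx) := hmemL x hx
    have hxO : x ∈ O (Nat.find hx) := by
      by_contra hxo
      exact hxKO (mem_iUnion.2 ⟨Nat.find hx, hxL.1, hxo⟩)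
    have hxnorm : ‖g x‖ < ((Nat.find hx : ℝ)) + 1 := by
      have hmem : x ∈ O (Nat.find hx) ∩ D := ⟨hxO, hxD⟩
      rw [← hOe] at hmem
      exact hmem.1
    exact hne (by rw [hfeqF _ x hxL, hFe _ x hxD, hgq_eq _ x hxnorm])
  have hMeagre : IsMeagre (Uᶜ ∪ {x | x ∈ Uᶜᶜ ∧ f x ≠ g x}) :=
    isMeagre_union' hWmeagre
      ((isMeagre_union' hDcmeagre (isMeagre_iUnion hKOmeagre)).mono hbadsub)
  -- assemble
  refine ⟨f, Uᶜ, ⟨?_, ?_, ?_, ?_⟩, hMeagre, ?_⟩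
  · rw [compl_compl]; exact hUopen
  · rw [compl_compl]; exact hUdense
  · rw [compl_compl]; exact hfcont
  · intro y hy
    rw [compl_compl]
    exact htend y hy
  -- uniqueness
  intro f' W' hN' hM'
  have hW'o : IsOpen W'ᶜ := hN'.isOpen_compl
  have hW'd : Dense W'ᶜ := hN'.dense_compl
  have hE : ((Uᶜ ∪ {x | x ∈ Uᶜᶜ ∧ f x ≠ g x}) ∪ (W' ∪ {x | x ∈ W'ᶜ ∧ f' x ≠ g x}))ᶜ ∈
      residual Λ := isMeagre_union' hMeagre hM'
  set E := ((Uᶜ ∪ {x | x ∈ Uᶜᶜ ∧ f x ≠ g x}) ∪ (W' ∪ {x | x ∈ W'ᶜ ∧ f' x ≠ g x}))ᶜ with hEdef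
  have hEf : ∀ x ∈ E, x ∈ U → f x = g x := by
    intro x hxE hxU
    by_contra hne
    exact hxE (Or.inl (Or.inr ⟨by rwa [compl_compl], hne⟩))
  have hEf' : ∀ x ∈ E, x ∈ W'ᶜ → f' x = g x := by
    intro x hxE hxW'
    by_contra hne
    exact hxE (Or.inr (Or.inr ⟨hxW', hne⟩))
  have hEdense_in : ∀ {Ω : Set Λ}, IsOpen Ω → Ω ⊆ closure (Ω ∩ E) := by
    intro Ω hΩo x hxΩ
    rw [mem_closure_iff]
    intro V hVo hxV
    obtain ⟨z, hz⟩ := (dense_of_mem_residual hE).inter_open_nonempty (V ∩ Ω)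
      (hVo.inter hΩo) ⟨x, hxV, hxΩ⟩
    exact ⟨z, hz.1.1, hz.1.2, hz.2⟩
  have claim1 : ∀ x ∈ U ∩ W'ᶜ, f' x = f x := by
    have heq : EqOn f' f (U ∩ W'ᶜ) := by
      apply Set.EqOn.of_subset_closure (s := (U ∩ W'ᶜ) ∩ E)
      · rintro x ⟨⟨hxU, hxW'⟩, hxE⟩
        rw [hEf' x hxE hxW', ← hEf x hxE hxU]
      · exact hN'.contOn.mono inter_subset_right
      · exact hfcont.mono inter_subset_left
      · exact inter_subset_left
      · exact hEdense_in (hUopen.inter hW'o)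
    exact heq
  have hsub1 : W' ⊆ Uᶜ := by
    intro y hyW'
    by_contra hyU'
    have hyU : y ∈ U := not_not.1 hyU'
    have hyc : y ∈ closure (U ∩ W'ᶜ) := by
      rw [mem_closure_iff]
      intro V hVo hyV
      obtain ⟨z, hz⟩ := hW'd.inter_open_nonempty (V ∩ U) (hVo.inter hUopen) ⟨y, hyV, hyU⟩
      exact ⟨z, hz.1.1, hz.1.2, hz.2⟩
    have hne : (𝓝[U ∩ W'ᶜ] y).NeBot := mem_closure_iff_nhdsWithin_neBot.1 hyc
    have ht1 : Tendsto (fun x => ‖f' x‖) (𝓝[U ∩ W'ᶜ] y) atTop :=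
      (hN'.tendsto_norm y hyW').mono_left (nhdsWithin_mono _ inter_subset_right)
    have ht2 : Tendsto (fun x => ‖f x‖) (𝓝[U ∩ W'ᶜ] y) (𝓝 ‖f y‖) :=
      ((hfcont y hyU).norm).mono_left (nhdsWithin_mono _ inter_subset_left)
    have ht1' : Tendsto (fun x => ‖f x‖) (𝓝[U ∩ W'ᶜ] y) atTop := by
      refine ht1.congr' ?_
      filter_upwards [self_mem_nhdsWithin] with x hx
      rw [claim1 x hx]
    exact not_tendsto_atTop_of_tendsto_nhds ht2 ht1'
  have hsub2 : Uᶜ ⊆ W' := by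
    intro y hyW
    by_contra hyW'
    have hyW'c : y ∈ W'ᶜ := hyW'
    have hyc : y ∈ closure (U ∩ W'ᶜ) := by
      rw [mem_closure_iff]
      intro V hVo hyV
      obtain ⟨z, hz⟩ := hUdense.inter_open_nonempty (V ∩ W'ᶜ) (hVo.inter hW'o) ⟨y, hyV, hyW'c⟩
      exact ⟨z, hz.1.1, hz.2, hz.1.2⟩
    have hne : (𝓝[U ∩ W'ᶜ] y).NeBot := mem_closure_iff_nhdsWithin_neBot.1 hyc
    have ht1 : Tendsto (fun x => ‖f x‖) (𝓝[U ∩ W'ᶜ] y) atTop :=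
      (htend y hyW).mono_left (nhdsWithin_mono _ inter_subset_left)
    have ht2 : Tendsto (fun x => ‖f' x‖) (𝓝[U ∩ W'ᶜ] y) (𝓝 ‖f' y‖) :=
      ((hN'.contOn y hyW'c).norm).mono_left (nhdsWithin_mono _ inter_subset_right)
    have ht1' : Tendsto (fun x => ‖f' x‖) (𝓝[U ∩ W'ᶜ] y) atTop := by
      refine ht1.congr' ?_
      filter_upwards [self_mem_nhdsWithin] with x hx
      rw [claim1 x hx]
    exact not_tendsto_atTop_of_tendsto_nhds ht2 ht1'
  have hWeq : W' = Uᶜ := subset_antisymm hsub1 hsub2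
  refine ⟨hWeq, fun x hxU => claim1 x ⟨by rwa [compl_compl] at hxU, ?_⟩⟩
  rw [hWeq]
  exact hxU
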